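/- Let N ≥ 1 be an integer and let f(x) = ReLU(T_N(x)) and g(x) = 1/π + T_N(x)/2 on [-1,1]. Then for every integer k with 0 ≤ k ≤ N, ∫_{-1}^{1} (f(x) − g(x)) · T_k(x) · (1−x²)^{−1/2} dx = 0; that is, g is the orthogonal projection of f onto the span of T₀, …, T_N with respect to the Chebyshev weight 1/√(1−x²). -/

import Mathlib

open Real MeasureTheory intervalIntegral Polynomial

lemma cos_image_Ioo : Real.cos '' Set.Ioo 0 π = Set.Ioo (-1 : ℝ) 1 := by
  ext x
  constructor
  · rintro ⟨θ, ⟨h0, hπ⟩, rfl⟩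
    have h1 : Real.cos θ < Real.cos 0 :=
      Real.strictAntiOn_cos ⟨le_rfl, Real.pi_pos.le⟩ ⟨h0.le, hπ.le⟩ h0
    have h2 : Real.cos π < Real.cos θ :=
      Real.strictAntiOn_cos ⟨h0.le, hπ.le⟩ ⟨Real.pi_pos.le, le_rfl⟩ hπ
    rw [Real.cos_zero] at h1
    rw [Real.cos_pi] at h2
    exact ⟨h2, h1⟩
  · rintro ⟨hx1, hx2⟩
    refine ⟨Real.arccos x, ⟨Real.arccos_pos.2 hx2, ?_⟩, Real.cos_arccos hx1.le hx2.le⟩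
    refine lt_of_le_of_ne (Real.arccos_le_pi x) (fun h => ?_)
    have := Real.arccos_eq_pi.1 h
    linarith

lemma cheb_cov (h : ℝ → ℝ) :
    (∫ x in (-1:ℝ)..1, h x * (1 - x ^ 2) ^ (-(1:ℝ)/2)) = ∫ θ in (0:ℝ)..π, h (Real.cos θ) := by
  rw [intervalIntegral.integral_of_le (by norm_num : (-1:ℝ) ≤ 1),
      intervalIntegral.integral_of_le Real.pi_pos.le,
      MeasureTheory.integral_Ioc_eq_integral_Ioo,
      MeasureTheory.integral_Ioc_eq_integral_Ioo,
      ← cos_image_Ioo,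
      MeasureTheory.integral_image_eq_integral_abs_deriv_smul measurableSet_Ioo
        (fun θ _ => (Real.hasDerivAt_cos θ).hasDerivWithinAt)
        (Real.injOn_cos.mono Set.Ioo_subset_Icc_self)]
  refine MeasureTheory.setIntegral_congr_fun measurableSet_Ioo (fun θ hθ => ?_)
  obtain ⟨h0, hπ⟩ := hθ
  have hs : 0 < Real.sin θ := Real.sin_pos_of_pos_of_lt_pi h0 hπ
  have h1 : (1 : ℝ) - Real.cos θ ^ 2 = Real.sin θ ^ 2 := by
    have := Real.sin_sq_add_cos_sq θ; linarith
  have h2 : (Real.sin θ ^ 2 : ℝ) ^ (-(1:ℝ)/2) = (Real.sin θ)⁻¹ := by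
    rw [← Real.rpow_natCast (Real.sin θ) 2, ← Real.rpow_mul hs.le]
    norm_num
    rw [Real.rpow_neg_one]
  simp only [smul_eq_mul, abs_neg, abs_of_pos hs, h1, h2]
  field_simp

lemma sum_cos_sin_zero (n : ℕ) (β : ℝ) (hβ1 : 0 < β) (hβ2 : β ≤ π)
    (hβn : Complex.exp ((n : ℂ) * β * Complex.I) = 1) :
    (∑ j ∈ Finset.range n, Real.cos (j * β)) = 0 ∧
    (∑ j ∈ Finset.range n, Real.sin (j * β)) = 0 := by
  have hz : Complex.exp ((β : ℂ) * Complex.I) ≠ 1 := by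
    intro he
    rw [Complex.exp_eq_one_iff] at he
    obtain ⟨m, hm⟩ := he
    have hI : (Complex.I : ℂ) ≠ 0 := Complex.I_ne_zero
    have hb : (β : ℂ) = (m : ℂ) * (2 * (π : ℂ)) := by
      have h2 : (β:ℂ) * Complex.I = ((m:ℂ) * (2 * (π:ℂ))) * Complex.I := by
        rw [hm]; ring
      exact mul_right_cancel₀ hI h2
    have hb' : β = (m : ℝ) * (2 * π) := by
      exact_mod_cast hb
    have hπ := Real.pi_pos
    rcases le_or_gt m 0 with hm0 | hm0
    · have : (m : ℝ) ≤ 0 := by exact_mod_cast hm0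
      nlinarith
    · have : (1 : ℝ) ≤ (m : ℝ) := by exact_mod_cast hm0
      nlinarith
  have hgeom : (∑ j ∈ Finset.range n, Complex.exp ((j : ℂ) * β * Complex.I)) = 0 := by
    have : ∀ j : ℕ, Complex.exp ((j : ℂ) * β * Complex.I)
        = Complex.exp ((β:ℂ) * Complex.I) ^ j := by
      intro j
      rw [← Complex.exp_nat_mul]
      ring_nf
    simp only [this]
    rw [geom_sum_eq hz, ← Complex.exp_nat_mul]
    rw [show (n : ℂ) * ((β:ℂ) * Complex.I) = (n : ℂ) * β * Complex.I by ring, hβn]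
    simp
  constructor
  · have := congrArg Complex.re hgeom
    rw [Complex.re_sum] at this
    simpa [show ∀ j : ℕ, ((j:ℂ) * β * Complex.I) = (((j * β : ℝ)):ℂ) * Complex.I by
      intro j; push_cast; ring, Complex.exp_ofReal_mul_I_re] using this
  · have := congrArg Complex.im hgeom
    rw [Complex.im_sum] at this
    simpa [show ∀ j : ℕ, ((j:ℂ) * β * Complex.I) = (((j * β : ℝ)):ℂ) * Complex.I by
      intro j; push_cast; ring, Complex.exp_ofReal_mul_I_im] using this


lemma abs_cos_periodic : Function.Periodic (fun u => |Real.cos u|) π := by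
  intro x
  simp only
  rw [Real.cos_antiperiodic x, abs_neg]

lemma integral_abs_cos : ∫ u in (0:ℝ)..π, |Real.cos u| = 2 := by
  have hi1 : IntervalIntegrable (fun u => |Real.cos u|) volume 0 (π/2) :=
    (Real.continuous_cos.abs).intervalIntegrable _ _
  have hi2 : IntervalIntegrable (fun u => |Real.cos u|) volume (π/2) π :=
    (Real.continuous_cos.abs).intervalIntegrable _ _
  rw [← intervalIntegral.integral_add_adjacent_intervals hi1 hi2]
  have hπ := Real.pi_pos
  have e1 : ∫ u in (0:ℝ)..(π/2), |Real.cos u| = ∫ u in (0:ℝ)..(π/2), Real.cos u := by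
    refine intervalIntegral.integral_congr (fun u hu => ?_)
    rw [Set.uIcc_of_le (by linarith)] at hu
    exact abs_of_nonneg (Real.cos_nonneg_of_mem_Icc ⟨by linarith [hu.1], hu.2⟩)
  have e2 : ∫ u in (π/2:ℝ)..π, |Real.cos u| = ∫ u in (π/2:ℝ)..π, -Real.cos u := by
    refine intervalIntegral.integral_congr (fun u hu => ?_)
    rw [Set.uIcc_of_le (by linarith)] at hu
    exact abs_of_nonpos (Real.cos_nonpos_of_pi_div_two_le_of_le hu.1 (by linarith [hu.2]))
  rw [e1, e2, intervalIntegral.integral_neg, integral_cos, integral_cos]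
  simp [Real.sin_pi_div_two, Real.sin_pi]
  norm_num

lemma abs_cos_N_integral (N : ℕ) (hN : 1 ≤ N) :
    ∫ θ in (0:ℝ)..π, |Real.cos (N * θ)| = 2 := by
  have hN0 : (N : ℝ) ≠ 0 := by positivity
  have h1 : ∫ θ in (0:ℝ)..π, |Real.cos (N * θ)|
      = (N:ℝ)⁻¹ • ∫ u in ((N:ℝ)*0)..((N:ℝ)*π), |Real.cos u| :=
    intervalIntegral.integral_comp_mul_left (fun u => |Real.cos u|) hN0
  rw [h1, mul_zero]
  have h2 : ∫ u in (0:ℝ)..((N:ℝ)*π), |Real.cos u| = (N:ℤ) • ∫ u in (0:ℝ)..π, |Real.cos u| := by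
    have := abs_cos_periodic.intervalIntegral_add_zsmul_eq (N : ℤ) 0
      (fun a b => (Real.continuous_cos.abs).intervalIntegrable a b)
    simpa using this
  rw [h2, integral_abs_cos]
  simp [smul_eq_mul]
  field_simp

lemma key_orth (N k : ℕ) (hN : 1 ≤ N) (hk : 1 ≤ k) (hkN : k ≤ N) :
    ∫ θ in (0:ℝ)..π, |Real.cos (N * θ)| * Real.cos (k * θ) = 0 := by
  have hπ := Real.pi_pos
  have hN0 : (N : ℝ) ≠ 0 := by positivity
  have hNpos : (0:ℝ) < N := by positivity
  set F : ℝ → ℝ := fun θ => |Real.cos (N * θ)| * Real.cos (k * θ) with hF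
  have hFc : Continuous F := by
    apply Continuous.mul
    · exact (Real.continuous_cos.comp (continuous_const.mul continuous_id)).abs
    · exact Real.continuous_cos.comp (continuous_const.mul continuous_id)
  rcases Nat.even_or_odd k with hke | hko
  · -- even case: periodization
    set c : ℝ := π / N with hc
    have hNc : (N : ℝ) * c = π := by rw [hc]; field_simp
    set β : ℝ := k * c with hβ
    have hsum : ∑ j ∈ Finset.range N, ∫ θ in ((j:ℝ)*c)..((j+1:ℕ):ℝ)*c, F θ
        = ∫ θ in ((0:ℕ):ℝ)*c..((N:ℕ):ℝ)*c, F θ :=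
      intervalIntegral.sum_integral_adjacent_intervals (a := fun j => (j:ℝ)*c)
        (fun j _ => hFc.intervalIntegrable _ _)
    have h0c : ((0:ℕ):ℝ)*c = 0 := by norm_num
    have hNcc : ((N:ℕ):ℝ)*c = π := by push_cast; exact hNc
    rw [h0c, hNcc] at hsum
    -- each piece
    have hA : IntervalIntegrable (fun θ => |Real.cos (N*θ)| * Real.cos (k*θ)) volume 0 c :=
      hFc.intervalIntegrable _ _
    have hB : IntervalIntegrable (fun θ => |Real.cos (N*θ)| * Real.sin (k*θ)) volume 0 c := by
      apply Continuous.intervalIntegrable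
      exact ((Real.continuous_cos.comp (continuous_const.mul continuous_id)).abs).mul
        (Real.continuous_sin.comp (continuous_const.mul continuous_id))
    have hpiece : ∀ j : ℕ, ∫ θ in ((j:ℝ)*c)..((j+1:ℕ):ℝ)*c, F θ
        = Real.cos (j*β) * (∫ θ in (0:ℝ)..c, |Real.cos (N*θ)| * Real.cos (k*θ))
          - Real.sin (j*β) * (∫ θ in (0:ℝ)..c, |Real.cos (N*θ)| * Real.sin (k*θ)) := by
      intro j
      have htr : ∫ θ in (0:ℝ)..c, F (θ + (j:ℝ)*c) = ∫ θ in ((j:ℝ)*c)..((j+1:ℕ):ℝ)*c, F θ := by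
        rw [intervalIntegral.integral_comp_add_right F ((j:ℝ)*c)]
        congr 1
        · ring
        · push_cast; ring
      rw [← htr]
      have heq : ∀ θ : ℝ, F (θ + (j:ℝ)*c)
          = Real.cos (j*β) * (|Real.cos (N*θ)| * Real.cos (k*θ))
            - Real.sin (j*β) * (|Real.cos (N*θ)| * Real.sin (k*θ)) := by
        intro θ
        have e1 : (N:ℝ) * (θ + (j:ℝ)*c) = N*θ + j*π := by
          rw [← hNc]; ring
        have e2 : (k:ℝ) * (θ + (j:ℝ)*c) = k*θ + j*β := by
          rw [hβ]; ring
        rw [hF]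
        simp only [e1, e2]
        have e3 : |Real.cos ((N:ℝ)*θ + j*π)| = |Real.cos ((N:ℝ)*θ)| := by
          rw [Real.cos_add, Real.sin_nat_mul_pi]
          have : Real.cos ((j:ℝ)*π) = (-1)^j := by
            have := Real.cos_nat_mul_pi_sub 0 j
            simpa using this
          rw [this]
          rw [mul_zero, sub_zero, abs_mul, abs_pow]
          simp
        rw [e3, Real.cos_add]
        ring
      simp only [heq]
      rw [intervalIntegral.integral_sub (hA.const_mul _) (hB.const_mul _),
        intervalIntegral.integral_const_mul, intervalIntegral.integral_const_mul]
    -- sum the pieces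
    have hβpos : 0 < β := by
      rw [hβ, hc]; positivity
    have hβle : β ≤ π := by
      rw [hβ, hc]
      calc (k:ℝ) * (π / N) = (k:ℝ)/N * π := by ring
        _ ≤ 1 * π := by
            apply mul_le_mul_of_nonneg_right _ hπ.le
            rw [div_le_one hNpos]
            exact_mod_cast hkN
        _ = π := by ring
    have hexp : Complex.exp ((N : ℂ) * β * Complex.I) = 1 := by
      obtain ⟨m, hm⟩ := hke
      have : ((N:ℂ)) * β = (m:ℂ) * (2 * π) := by
        have : (N:ℝ) * β = (m:ℝ) * (2*π) := by
          rw [hβ, hc]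
          field_simp
          push_cast [hm]
          ring
        exact_mod_cast this
      have harg : (N:ℂ) * β * Complex.I = (m:ℂ) * (2 * (π:ℂ) * Complex.I) := by
        linear_combination Complex.I * this
      rw [harg]
      have h2 := Complex.exp_int_mul_two_pi_mul_I (m : ℤ)
      rw [show ((m:ℤ):ℂ) = (m:ℂ) by push_cast; rfl] at h2
      exact h2
    obtain ⟨hcos0, hsin0⟩ := sum_cos_sin_zero N β hβpos hβle hexp
    have : ∫ θ in (0:ℝ)..π, F θ = 0 := by
      rw [← hsum]
      rw [Finset.sum_congr rfl (fun j _ => hpiece j)]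
      rw [Finset.sum_sub_distrib, ← Finset.sum_mul, ← Finset.sum_mul, hcos0, hsin0]
      ring
    exact this
  · -- odd case: reflection
    have hrefl : ∫ θ in (0:ℝ)..π, F (π - θ) = ∫ θ in (0:ℝ)..π, F θ := by
      have := intervalIntegral.integral_comp_sub_left F π (a := (0:ℝ)) (b := π)
      simpa using this
    have hneg : ∀ θ, F (π - θ) = -F θ := by
      intro θ
      rw [hF]
      simp only
      have e1 : (N:ℝ) * (π - θ) = (N:ℝ)*π - N*θ := by ring
      have e2 : (k:ℝ) * (π - θ) = (k:ℝ)*π - k*θ := by ring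
      rw [e1, e2, Real.cos_nat_mul_pi_sub, Real.cos_nat_mul_pi_sub, hko.neg_one_pow]
      rw [abs_mul, abs_pow, abs_neg, abs_one, one_pow, one_mul]
      ring
    simp only [hneg, intervalIntegral.integral_neg] at hrefl
    linarith

/-- With `f x = ReLU (T_N x)` and `g x = 1/π + T_N x / 2`, for every `k ≤ N` the
difference `f - g` is orthogonal to `T_k` for the Chebyshev weight `(1-x²)^{-1/2}` on `[-1,1]`;
i.e., `g` is the Chebyshev-weighted orthogonal projection of `f` onto `span {T₀, …, T_N}`. -/
theorem relu_chebyshev_low_modes_projection (N : ℕ) (hN : 1 ≤ N) (f g : ℝ → ℝ)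
    (hf : ∀ x, f x = max ((Polynomial.Chebyshev.T ℝ N).eval x) 0)
    (hg : ∀ x, g x = 1 / π + (Polynomial.Chebyshev.T ℝ N).eval x / 2) :
    ∀ k : ℕ, k ≤ N →
      (∫ x in (-1 : ℝ)..1,
        (f x - g x) * (Polynomial.Chebyshev.T ℝ k).eval x * (1 - x ^ 2) ^ (-(1 : ℝ) / 2)) = 0 := by
  intro k hk
  have hπ := Real.pi_pos
  have hcov : (∫ x in (-1 : ℝ)..1,
        (f x - g x) * (Polynomial.Chebyshev.T ℝ k).eval x * (1 - x ^ 2) ^ (-(1 : ℝ) / 2))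
      = ∫ θ in (0:ℝ)..π,
        (f (Real.cos θ) - g (Real.cos θ)) * (Polynomial.Chebyshev.T ℝ k).eval (Real.cos θ) :=
    cheb_cov (fun x => (f x - g x) * (Polynomial.Chebyshev.T ℝ k).eval x)
  rw [hcov]
  have hcast : ∀ (m : ℕ) (θ : ℝ), (Polynomial.Chebyshev.T ℝ m).eval (Real.cos θ)
      = Real.cos ((m:ℝ) * θ) := by
    intro m θ
    rw [Polynomial.Chebyshev.T_real_cos]
    norm_num
  have hpt : ∀ θ : ℝ, (f (Real.cos θ) - g (Real.cos θ))
        * (Polynomial.Chebyshev.T ℝ k).eval (Real.cos θ)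
      = (1/2) * (|Real.cos ((N:ℝ)*θ)| * Real.cos ((k:ℝ)*θ))
        - (1/π) * Real.cos ((k:ℝ)*θ) := by
    intro θ
    rw [hf, hg, hcast, hcast]
    rcases le_total (Real.cos ((N:ℝ)*θ)) 0 with h | h
    · rw [max_eq_right h, abs_of_nonpos h]; ring
    · rw [max_eq_left h, abs_of_nonneg h]; ring
  simp only [hpt]
  have hi1 : IntervalIntegrable (fun θ => (1/2) * (|Real.cos ((N:ℝ)*θ)| * Real.cos ((k:ℝ)*θ)))
      volume 0 π := by
    apply Continuous.intervalIntegrable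
    exact continuous_const.mul
      (((Real.continuous_cos.comp (continuous_const.mul continuous_id)).abs).mul
        (Real.continuous_cos.comp (continuous_const.mul continuous_id)))
  have hi2 : IntervalIntegrable (fun θ => (1/π) * Real.cos ((k:ℝ)*θ)) volume 0 π := by
    apply Continuous.intervalIntegrable
    exact continuous_const.mul (Real.continuous_cos.comp (continuous_const.mul continuous_id))
  rw [intervalIntegral.integral_sub hi1 hi2,
    intervalIntegral.integral_const_mul, intervalIntegral.integral_const_mul]
  rcases Nat.eq_zero_or_pos k with rfl | hk1
  · -- k = 0
    have e0 : ∀ θ : ℝ, Real.cos (((0:ℕ):ℝ)*θ) = 1 := by intro θ; norm_num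
    simp only [e0, mul_one]
    rw [abs_cos_N_integral N hN, intervalIntegral.integral_const]
    simp
  · -- 1 ≤ k
    rw [key_orth N k hN hk1 hk]
    have hck : ∫ θ in (0:ℝ)..π, Real.cos ((k:ℝ)*θ) = 0 := by
      have hk0 : (k:ℝ) ≠ 0 := by positivity
      have := intervalIntegral.integral_comp_mul_left Real.cos (a := (0:ℝ)) (b := π) hk0
      rw [this]
      simp [Real.sin_nat_mul_pi]
    rw [hck]
    ring
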